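/- Let G = (V,E) be a finite connected simple graph with at least one edge. Then MEO(Γ_G) · Mod₂(Γ_G) = 1. Moreover, if ρ* is an admissible density attaining Mod₂(Γ_G) and μ* is an MEO-optimal pmf, then η_{μ*}(e) = ρ*(e)/Mod₂(Γ_G) for every e ∈ E, and μ*(γ)(1 − ∑_{e∈γ} ρ*(e)) = 0 for every spanning tree γ ∈ Γ_G. -/

import Mathlib

noncomputable section
open scoped Classical
open Finset

variable {V : Type*} [Fintype V] [DecidableEq V]

/-- A pmf on a finite family `Γ` of edge sets. -/
def IsPmf (Γ : Finset (Finset (Sym2 V))) (μ : Finset (Sym2 V) → ℝ) : Prop :=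
  (∀ γ, 0 ≤ μ γ) ∧ (∀ γ, γ ∉ Γ → μ γ = 0) ∧ ∑ γ ∈ Γ, μ γ = 1

/-- Edge usage probability. -/
def eta (Γ : Finset (Finset (Sym2 V))) (μ : Finset (Sym2 V) → ℝ) (e : Sym2 V) : ℝ :=
  ∑ γ ∈ Γ.filter (fun γ => e ∈ γ), μ γ

/-- Expected overlap. -/
def EO (Γ : Finset (Finset (Sym2 V))) (μ : Finset (Sym2 V) → ℝ) : ℝ :=
  ∑ γ ∈ Γ, ∑ γ' ∈ Γ, ((γ ∩ γ').card : ℝ) * μ γ * μ γ'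

/-- Minimum expected overlap. -/
def MEO (Γ : Finset (Finset (Sym2 V))) : ℝ :=
  sInf {x : ℝ | ∃ μ, IsPmf Γ μ ∧ x = EO Γ μ}

/-- The set of spanning trees of `G`, as finsets of edges. -/
def spanningTrees (G : SimpleGraph V) : Finset (Finset (Sym2 V)) :=
  Finset.univ.filter (fun γ => ↑γ ⊆ G.edgeSet ∧
    (SimpleGraph.fromEdgeSet (↑γ : Set (Sym2 V))).Connected ∧
    γ.card = Fintype.card V - 1)

/-- Edges of `G` with both endpoints in `W`. -/
def edgesWithin (G : SimpleGraph V) (W : Finset V) : Finset (Sym2 V) :=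
  G.edgeFinset.filter (fun e => ∀ v ∈ e, v ∈ W)

/-- `γ` is a spanning tree of the subgraph of `G` induced by the vertex set `W`. -/
def IsSpanningTreeOn (G : SimpleGraph V) (W : Finset V) (γ : Finset (Sym2 V)) : Prop :=
  γ ⊆ edgesWithin G W ∧
    ((SimpleGraph.fromEdgeSet (↑γ : Set (Sym2 V))).induce (↑W : Set V)).Connected ∧
    γ.card = W.card - 1

def spanningTreesOn (G : SimpleGraph V) (W : Finset V) : Finset (Finset (Sym2 V)) :=
  Finset.univ.filter (IsSpanningTreeOn G W)

def Adm (Γ : Finset (Finset (Sym2 V))) (ρ : Sym2 V → ℝ) : Prop :=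
  (∀ e, 0 ≤ ρ e) ∧ ∀ γ ∈ Γ, 1 ≤ ∑ e ∈ γ, ρ e

def Mod2 (Eset : Finset (Sym2 V)) (Γ : Finset (Finset (Sym2 V))) : ℝ :=
  sInf {x : ℝ | ∃ ρ, Adm Γ ρ ∧ x = ∑ e ∈ Eset, (ρ e) ^ 2}

/-- A fair spanning tree. -/
def IsFair (G : SimpleGraph V) (γ : Finset (Sym2 V)) : Prop :=
  ∃ μ, IsPmf (spanningTrees G) μ ∧ EO (spanningTrees G) μ = MEO (spanningTrees G) ∧ 0 < μ γ

def IsFeasiblePartition (G : SimpleGraph V) (P : Finset (Finset V)) : Prop :=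
  2 ≤ P.card ∧ (∀ p ∈ P, p.Nonempty) ∧ (∀ v : V, ∃! p, p ∈ P ∧ v ∈ p) ∧
    ∀ p ∈ P, (G.induce (↑p : Set V)).Connected

/-- The edges of `G` joining distinct parts of the partition `P`. -/
def cutEdges (G : SimpleGraph V) (P : Finset (Finset V)) : Finset (Sym2 V) :=
  G.edgeFinset.filter (fun e => ¬ ∃ p ∈ P, ∀ v ∈ e, v ∈ p)

/-- `G` is homogeneous. -/
def IsHomogeneous (G : SimpleGraph V) : Prop :=
  ∃ μ, IsPmf (spanningTrees G) μ ∧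
    ∃ c : ℝ, ∀ e ∈ G.edgeFinset, eta (spanningTrees G) μ e = c


set_option linter.unusedSectionVars false
set_option linter.unusedVariables false

lemma connected_of_forall_reachable {G G' : SimpleGraph V} (hG : G.Connected)
    (h : ∀ a b, G.Adj a b → G'.Reachable a b) : G'.Connected := by
  have key : ∀ {a b : V} (_ : G.Walk a b), G'.Reachable a b := by
    intro a b p
    induction p with
    | nil => exact SimpleGraph.Reachable.refl _
    | cons hadj p ih => exact (h _ _ hadj).trans ih
  rw [SimpleGraph.connected_iff]
  refine ⟨fun a b => ?_, hG.nonempty⟩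
  obtain ⟨p⟩ := hG.preconnected a b
  exact key p

lemma exists_isTree_le (G : SimpleGraph V) (hG : G.Connected) : ∃ T ≤ G, T.IsTree := by
  induction G using WellFoundedLT.induction with
  | _ G ih =>
    by_cases hac : G.IsAcyclic
    · exact ⟨G, le_refl _, ⟨hG, hac⟩⟩
    · rw [SimpleGraph.isAcyclic_iff_forall_adj_isBridge] at hac
      push_neg at hac
      obtain ⟨v, w, hadj, hbr⟩ := hac
      rw [SimpleGraph.isBridge_iff] at hbr
      push_neg at hbr
      have hreach : (G \ SimpleGraph.fromEdgeSet {s(v, w)}).Reachable v w := hbr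
      set G' := G \ SimpleGraph.fromEdgeSet {s(v, w)} with hG'
      have hle : G' ≤ G := sdiff_le
      have hlt : G' < G := by
        refine lt_of_le_of_ne hle fun hEq => ?_
        have : G'.Adj v w := hEq ▸ hadj
        simp [hG', SimpleGraph.sdiff_adj, hadj.ne] at this
      have hconn : G'.Connected := by
        refine connected_of_forall_reachable hG fun a b hab => ?_
        by_cases he : s(a, b) = s(v, w)
        · rw [Sym2.eq_iff] at he
          rcases he with ⟨rfl, rfl⟩ | ⟨rfl, rfl⟩
          · exact hreach
          · exact hreach.symm
        · exact SimpleGraph.Adj.reachable (by simp [hG', SimpleGraph.sdiff_adj, hab, he, hab.ne])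
      obtain ⟨T, hT, hTt⟩ := ih G' hlt hconn
      exact ⟨T, hT.trans hle, hTt⟩


lemma mem_spanningTrees_iff {G : SimpleGraph V} {γ : Finset (Sym2 V)} :
    γ ∈ spanningTrees G ↔ ↑γ ⊆ G.edgeSet ∧
      (SimpleGraph.fromEdgeSet (↑γ : Set (Sym2 V))).Connected ∧
      γ.card = Fintype.card V - 1 := by
  simp [spanningTrees]

lemma spanningTrees_nonempty (G : SimpleGraph V) (hG : G.Connected)
    (hT : ∃ T ≤ G, T.IsTree) : (spanningTrees G).Nonempty := by
  obtain ⟨T, hle, hTt⟩ := hT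
  refine ⟨T.edgeFinset, mem_spanningTrees_iff.2 ⟨?_, ?_, ?_⟩⟩
  · rw [SimpleGraph.coe_edgeFinset]
    exact SimpleGraph.edgeSet_mono hle
  · rw [SimpleGraph.coe_edgeFinset, SimpleGraph.fromEdgeSet_edgeSet]
    exact hTt.isConnected
  · have := hTt.card_edgeFinset
    omega





lemma eta_eq_sum_ite (Γ : Finset (Finset (Sym2 V))) (μ : Finset (Sym2 V) → ℝ) (e : Sym2 V) :
    eta Γ μ e = ∑ γ ∈ Γ, if e ∈ γ then μ γ else 0 := by
  rw [eta, Finset.sum_filter]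

/-- Key swap identity: EO as sum of squared edge usage. -/
lemma EO_eq_sum_sq (Es : Finset (Sym2 V)) (Γ : Finset (Finset (Sym2 V)))
    (hsub : ∀ γ ∈ Γ, γ ⊆ Es) (μ : Finset (Sym2 V) → ℝ) :
    EO Γ μ = ∑ e ∈ Es, (eta Γ μ e) ^ 2 := by
  have key : ∀ γ ∈ Γ, ∀ γ' ∈ Γ, ((γ ∩ γ').card : ℝ) * μ γ * μ γ' =
      ∑ e ∈ Es, (if e ∈ γ then μ γ else 0) * (if e ∈ γ' then μ γ' else 0) := by
    intro γ hγ γ' hγ'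
    have h1 : ∀ e : Sym2 V, (if e ∈ γ then μ γ else 0) * (if e ∈ γ' then μ γ' else 0)
        = if e ∈ γ ∩ γ' then μ γ * μ γ' else 0 := by
      intro e
      by_cases h1 : e ∈ γ <;> by_cases h2 : e ∈ γ' <;> simp [h1, h2]
    rw [Finset.sum_congr rfl fun e _ => h1 e, Finset.sum_ite_mem,
      Finset.inter_eq_right.2 ((Finset.inter_subset_left).trans (hsub γ hγ)),
      Finset.sum_const, nsmul_eq_mul]
    ring
  calc EO Γ μ = ∑ γ ∈ Γ, ∑ γ' ∈ Γ, ∑ e ∈ Es,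
        (if e ∈ γ then μ γ else 0) * (if e ∈ γ' then μ γ' else 0) := by
        refine Finset.sum_congr rfl fun γ hγ => Finset.sum_congr rfl fun γ' hγ' => ?_
        exact key γ hγ γ' hγ'
    _ = ∑ γ ∈ Γ, ∑ e ∈ Es, ∑ γ' ∈ Γ,
        (if e ∈ γ then μ γ else 0) * (if e ∈ γ' then μ γ' else 0) :=
        Finset.sum_congr rfl fun γ _ => Finset.sum_comm
    _ = ∑ e ∈ Es, ∑ γ ∈ Γ, ∑ γ' ∈ Γ,
        (if e ∈ γ then μ γ else 0) * (if e ∈ γ' then μ γ' else 0) := Finset.sum_comm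
    _ = ∑ e ∈ Es, (eta Γ μ e) ^ 2 := by
        refine Finset.sum_congr rfl fun e _ => ?_
        rw [eta_eq_sum_ite, sq, Finset.sum_mul_sum]

/-- Swap identity for ∑ ρ·η. -/
lemma sum_rho_eta (Es : Finset (Sym2 V)) (Γ : Finset (Finset (Sym2 V)))
    (hsub : ∀ γ ∈ Γ, γ ⊆ Es) (ρ : Sym2 V → ℝ) (μ : Finset (Sym2 V) → ℝ) :
    ∑ e ∈ Es, ρ e * eta Γ μ e = ∑ γ ∈ Γ, μ γ * ∑ e ∈ γ, ρ e := by
  calc ∑ e ∈ Es, ρ e * eta Γ μ e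
      = ∑ e ∈ Es, ∑ γ ∈ Γ, (if e ∈ γ then ρ e * μ γ else 0) := by
        refine Finset.sum_congr rfl fun e _ => ?_
        rw [eta_eq_sum_ite, Finset.mul_sum]
        exact Finset.sum_congr rfl fun γ _ => by by_cases h : e ∈ γ <;> simp [h]
    _ = ∑ γ ∈ Γ, ∑ e ∈ Es, (if e ∈ γ then ρ e * μ γ else 0) := Finset.sum_comm
    _ = ∑ γ ∈ Γ, μ γ * ∑ e ∈ γ, ρ e := by
        refine Finset.sum_congr rfl fun γ hγ => ?_
        rw [Finset.sum_ite_mem, Finset.inter_eq_right.2 (hsub γ hγ), Finset.mul_sum]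
        exact Finset.sum_congr rfl fun e _ => mul_comm _ _

/-- ∑ over a tree of η equals the overlap of μ with the point mass at that tree. -/
lemma sum_eta_tree (Γ : Finset (Finset (Sym2 V))) (μ : Finset (Sym2 V) → ℝ)
    (γ0 : Finset (Sym2 V)) :
    ∑ e ∈ γ0, eta Γ μ e = ∑ γ ∈ Γ, ((γ ∩ γ0).card : ℝ) * μ γ := by
  calc ∑ e ∈ γ0, eta Γ μ e
      = ∑ e ∈ γ0, ∑ γ ∈ Γ, (if e ∈ γ then μ γ else 0) := by
        exact Finset.sum_congr rfl fun e _ => eta_eq_sum_ite Γ μ e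
    _ = ∑ γ ∈ Γ, ∑ e ∈ γ0, (if e ∈ γ then μ γ else 0) := Finset.sum_comm
    _ = ∑ γ ∈ Γ, ((γ ∩ γ0).card : ℝ) * μ γ := by
        refine Finset.sum_congr rfl fun γ _ => ?_
        rw [Finset.sum_ite_mem, Finset.sum_const, nsmul_eq_mul, Finset.inter_comm]

lemma eta_nonneg {Γ : Finset (Finset (Sym2 V))} {μ : Finset (Sym2 V) → ℝ}
    (hμ : IsPmf Γ μ) (e : Sym2 V) : 0 ≤ eta Γ μ e :=
  Finset.sum_nonneg fun γ _ => hμ.1 γ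

lemma eta_le_one {Γ : Finset (Finset (Sym2 V))} {μ : Finset (Sym2 V) → ℝ}
    (hμ : IsPmf Γ μ) (e : Sym2 V) : eta Γ μ e ≤ 1 := by
  rw [eta, ← hμ.2.2]
  exact Finset.sum_le_sum_of_subset_of_nonneg (Finset.filter_subset _ _)
    fun γ _ _ => hμ.1 γ

/-- Key inequality: for any admissible ρ and pmf μ, `1 ≤ EO μ · ∑ρ²`. -/
lemma key_ineq (Es : Finset (Sym2 V)) (Γ : Finset (Finset (Sym2 V)))
    (hsub : ∀ γ ∈ Γ, γ ⊆ Es) (hne : ∀ γ ∈ Γ, γ.Nonempty)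
    (ρ : Sym2 V → ℝ) (hρ0 : ∀ e, 0 ≤ ρ e) (hρ1 : ∀ γ ∈ Γ, 1 ≤ ∑ e ∈ γ, ρ e)
    (μ : Finset (Sym2 V) → ℝ) (hμ : IsPmf Γ μ) (hΓ : Γ.Nonempty) :
    1 ≤ EO Γ μ * ∑ e ∈ Es, (ρ e) ^ 2 := by
  set A := ∑ e ∈ Es, (ρ e) ^ 2 with hA
  have hApos : 0 < A := by
    obtain ⟨γ, hγ⟩ := hΓ
    by_contra hle
    push_neg at hle
    have hA0 : A = 0 := le_antisymm hle (Finset.sum_nonneg fun e _ => sq_nonneg _)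
    have hz : ∀ e ∈ Es, ρ e = 0 := by
      intro e he
      have := (Finset.sum_eq_zero_iff_of_nonneg (fun e _ => sq_nonneg (ρ e))).1 hA0 e he
      exact pow_eq_zero_iff (by norm_num) |>.1 this
    have := hρ1 γ hγ
    rw [Finset.sum_congr rfl (fun e he => hz e (hsub γ hγ he))] at this
    simp at this
    linarith
  have hs : 1 ≤ ∑ e ∈ Es, ρ e * eta Γ μ e := by
    rw [sum_rho_eta Es Γ hsub ρ μ]
    calc (1:ℝ) = ∑ γ ∈ Γ, μ γ := hμ.2.2.symm
      _ ≤ ∑ γ ∈ Γ, μ γ * ∑ e ∈ γ, ρ e := by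
          refine Finset.sum_le_sum fun γ hγ => ?_
          nlinarith [hμ.1 γ, hρ1 γ hγ]
  have hsq : (0:ℝ) ≤ ∑ e ∈ Es, (A * eta Γ μ e - ρ e) ^ 2 :=
    Finset.sum_nonneg fun e _ => sq_nonneg _
  have hexp : ∑ e ∈ Es, (A * eta Γ μ e - ρ e) ^ 2 =
      A ^ 2 * EO Γ μ - 2 * A * (∑ e ∈ Es, ρ e * eta Γ μ e) + A := by
    rw [EO_eq_sum_sq Es Γ hsub μ, Finset.mul_sum, Finset.mul_sum, hA]
    rw [← Finset.sum_sub_distrib, ← Finset.sum_add_distrib]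
    exact Finset.sum_congr rfl fun e _ => by ring
  nlinarith [hsq, hexp, hApos, hs, sq_nonneg A]

def Bil (Γ : Finset (Finset (Sym2 V))) (μ ν : Finset (Sym2 V) → ℝ) : ℝ :=
  ∑ γ ∈ Γ, ∑ γ' ∈ Γ, ((γ ∩ γ').card : ℝ) * μ γ * ν γ'

lemma EO_eq_Bil (Γ : Finset (Finset (Sym2 V))) (μ : Finset (Sym2 V) → ℝ) :
    EO Γ μ = Bil Γ μ μ := rfl

lemma Bil_comm (Γ : Finset (Finset (Sym2 V))) (μ ν : Finset (Sym2 V) → ℝ) :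
    Bil Γ μ ν = Bil Γ ν μ := by
  rw [Bil, Bil, Finset.sum_comm]
  refine Finset.sum_congr rfl fun γ _ => Finset.sum_congr rfl fun γ' _ => ?_
  rw [Finset.inter_comm]
  ring

lemma Bil_left (Γ : Finset (Finset (Sym2 V))) (a b : ℝ) (μ ν g : Finset (Sym2 V) → ℝ) :
    Bil Γ (fun γ => a * μ γ + b * ν γ) g = a * Bil Γ μ g + b * Bil Γ ν g := by
  rw [Bil, Bil, Bil, Finset.mul_sum, Finset.mul_sum, ← Finset.sum_add_distrib]
  refine Finset.sum_congr rfl fun γ _ => ?_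
  rw [Finset.mul_sum, Finset.mul_sum, ← Finset.sum_add_distrib]
  exact Finset.sum_congr rfl fun γ' _ => by ring

lemma EO_mix (Γ : Finset (Finset (Sym2 V))) (a b : ℝ) (μ ν : Finset (Sym2 V) → ℝ) :
    EO Γ (fun γ => a * μ γ + b * ν γ) =
      a ^ 2 * EO Γ μ + 2 * a * b * Bil Γ μ ν + b ^ 2 * EO Γ ν := by
  have hr : ∀ g, Bil Γ g (fun γ => a * μ γ + b * ν γ) = a * Bil Γ g μ + b * Bil Γ g ν := by
    intro g
    rw [Bil_comm, Bil_left, Bil_comm Γ μ g, Bil_comm Γ ν g]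
  rw [EO_eq_Bil, Bil_left, hr, hr, EO_eq_Bil, EO_eq_Bil, Bil_comm Γ ν μ]
  ring

lemma delta_pmf {Γ : Finset (Finset (Sym2 V))} {γ0 : Finset (Sym2 V)} (h : γ0 ∈ Γ) :
    IsPmf Γ (fun γ => if γ = γ0 then 1 else 0) := by
  refine ⟨fun γ => by positivity, fun γ hγ => ?_, ?_⟩
  · simp only [ite_eq_right_iff]
    intro rfl'; exact absurd (rfl' ▸ h) hγ
  · rw [Finset.sum_ite_eq' Γ γ0 (fun _ => (1:ℝ))]
    simp [h]

lemma mix_pmf {Γ : Finset (Finset (Sym2 V))} {μ ν : Finset (Sym2 V) → ℝ}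
    (hμ : IsPmf Γ μ) (hν : IsPmf Γ ν) {t : ℝ} (h0 : 0 ≤ t) (h1 : t ≤ 1) :
    IsPmf Γ (fun γ => (1 - t) * μ γ + t * ν γ) := by
  refine ⟨fun γ => ?_, fun γ hγ => ?_, ?_⟩
  · show 0 ≤ (1 - t) * μ γ + t * ν γ
    nlinarith [hμ.1 γ, hν.1 γ]
  · show (1 - t) * μ γ + t * ν γ = 0
    rw [hμ.2.1 γ hγ, hν.2.1 γ hγ]; ring
  · show ∑ γ ∈ Γ, ((1 - t) * μ γ + t * ν γ) = 1
    rw [Finset.sum_add_distrib, ← Finset.mul_sum, ← Finset.mul_sum, hμ.2.2, hν.2.2]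
    ring

lemma EO_delta (Γ : Finset (Finset (Sym2 V))) {γ0 : Finset (Sym2 V)} (h : γ0 ∈ Γ) :
    EO Γ (fun γ => if γ = γ0 then 1 else 0) = (γ0.card : ℝ) := by
  rw [EO]
  have : ∀ γ ∈ Γ, ∑ γ' ∈ Γ, ((γ ∩ γ').card : ℝ) * (if γ = γ0 then (1:ℝ) else 0) *
      (if γ' = γ0 then (1:ℝ) else 0) = if γ = γ0 then ((γ ∩ γ0).card : ℝ) else 0 := by
    intro γ _
    rw [Finset.sum_eq_single_of_mem γ0 h (fun γ' _ hne => by simp [hne])]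
    by_cases hγ : γ = γ0 <;> simp [hγ]
  rw [Finset.sum_congr rfl this, Finset.sum_eq_single_of_mem γ0 h
    (fun γ _ hne => by simp [hne])]
  simp

lemma Bil_delta (Γ : Finset (Finset (Sym2 V))) (μ : Finset (Sym2 V) → ℝ)
    {γ0 : Finset (Sym2 V)} (h : γ0 ∈ Γ) :
    Bil Γ μ (fun γ => if γ = γ0 then 1 else 0) = ∑ e ∈ γ0, eta Γ μ e := by
  rw [sum_eta_tree, Bil]
  refine Finset.sum_congr rfl fun γ _ => ?_
  rw [Finset.sum_eq_single_of_mem γ0 h (fun γ' _ hne => by simp [hne])]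
  simp

/-- Variational inequality at an optimal pmf. -/
lemma variational {Γ : Finset (Finset (Sym2 V))} {μ : Finset (Sym2 V) → ℝ}
    (hμ : IsPmf Γ μ) (hopt : ∀ ν, IsPmf Γ ν → EO Γ μ ≤ EO Γ ν)
    {γ0 : Finset (Sym2 V)} (h0 : γ0 ∈ Γ) :
    EO Γ μ ≤ ∑ e ∈ γ0, eta Γ μ e := by
  by_contra hlt
  push_neg at hlt
  set δ : Finset (Sym2 V) → ℝ := fun γ => if γ = γ0 then 1 else 0 with hδ
  set B := ∑ e ∈ γ0, eta Γ μ e with hB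
  set E0 := EO Γ μ with hE0
  have hBbd : B ≤ (γ0.card : ℝ) := by
    calc B ≤ ∑ _e ∈ γ0, (1:ℝ) := Finset.sum_le_sum fun e _ => eta_le_one hμ e
      _ = (γ0.card : ℝ) := by simp
  set C := E0 - 2 * B + (γ0.card : ℝ) with hC
  have hd : 0 < E0 - B := by linarith
  have hCpos : 0 < C := by linarith
  set t := (E0 - B) / C with ht
  have ht0 : 0 < t := div_pos hd hCpos
  have ht1 : t ≤ 1 := by
    rw [ht, div_le_one hCpos]; linarith
  have hpmf := mix_pmf hμ (delta_pmf h0) ht0.le ht1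
  have hEOt : EO Γ (fun γ => (1 - t) * μ γ + t * δ γ) =
      (1 - t) ^ 2 * E0 + 2 * (1 - t) * t * B + t ^ 2 * (γ0.card : ℝ) := by
    rw [EO_mix, Bil_delta Γ μ h0, EO_delta Γ h0]
  have hle := hopt _ hpmf
  rw [hEOt] at hle
  have hform : (1 - t) ^ 2 * E0 + 2 * (1 - t) * t * B + t ^ 2 * (γ0.card : ℝ)
      = E0 - t * (2 * (E0 - B) - t * C) := by
    rw [hC]; ring
  rw [hform] at hle
  have htC : t * C = E0 - B := by
    rw [ht]; field_simp
  nlinarith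

lemma EO_continuous (Γ : Finset (Finset (Sym2 V))) :
    Continuous (fun μ : Finset (Sym2 V) → ℝ => EO Γ μ) := by
  unfold EO
  refine continuous_finset_sum _ fun γ _ => continuous_finset_sum _ fun γ' _ => ?_
  exact (continuous_const.mul (continuous_apply γ)).mul (continuous_apply γ')

lemma exists_min_pmf {Γ : Finset (Finset (Sym2 V))} (hΓ : Γ.Nonempty) :
    ∃ μ, IsPmf Γ μ ∧ ∀ ν, IsPmf Γ ν → EO Γ μ ≤ EO Γ ν := by
  set K : Set (Finset (Sym2 V) → ℝ) := {μ | IsPmf Γ μ} with hK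
  have hKne : K.Nonempty := ⟨_, delta_pmf hΓ.choose_spec⟩
  have hKsub : K ⊆ Set.pi Set.univ (fun _ => Set.Icc (0:ℝ) 1) := by
    intro μ hμ γ _
    refine ⟨hμ.1 γ, ?_⟩
    by_cases h : γ ∈ Γ
    · rw [← hμ.2.2]
      exact Finset.single_le_sum (fun γ' _ => hμ.1 γ') h
    · rw [hμ.2.1 γ h]; norm_num
  have hKclosed : IsClosed K := by
    have h1 : K = (⋂ γ, {μ : Finset (Sym2 V) → ℝ | 0 ≤ μ γ}) ∩
        ((⋂ γ ∈ {γ | γ ∉ Γ}, {μ : Finset (Sym2 V) → ℝ | μ γ = 0}) ∩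
        {μ : Finset (Sym2 V) → ℝ | ∑ γ ∈ Γ, μ γ = 1}) := by
      ext μ
      simp only [hK, Set.mem_inter_iff, Set.mem_iInter, Set.mem_setOf_eq, IsPmf]
    rw [h1]
    refine IsClosed.inter (isClosed_iInter fun γ =>
        isClosed_le continuous_const (continuous_apply γ)) (IsClosed.inter ?_ ?_)
    · exact isClosed_biInter fun γ _ => isClosed_eq (continuous_apply γ) continuous_const
    · exact isClosed_eq (continuous_finset_sum _ fun γ _ => continuous_apply γ)
        continuous_const
  have hKcpt : IsCompact K :=
    IsCompact.of_isClosed_subset (isCompact_univ_pi fun _ => isCompact_Icc)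
      hKclosed hKsub
  obtain ⟨μ, hμK, hmin⟩ := hKcpt.exists_isMinOn hKne (EO_continuous Γ).continuousOn
  exact ⟨μ, hμK, fun ν hν => hmin hν⟩

lemma MEO_eq {Γ : Finset (Finset (Sym2 V))} {μ : Finset (Sym2 V) → ℝ}
    (hμ : IsPmf Γ μ) (hopt : ∀ ν, IsPmf Γ ν → EO Γ μ ≤ EO Γ ν) :
    MEO Γ = EO Γ μ := by
  have hlb : ∀ x ∈ {x : ℝ | ∃ ν, IsPmf Γ ν ∧ x = EO Γ ν}, EO Γ μ ≤ x := by
    rintro x ⟨ν, hν, rfl⟩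
    exact hopt ν hν
  exact le_antisymm (csInf_le ⟨EO Γ μ, hlb⟩ ⟨μ, hμ, rfl⟩)
    (le_csInf ⟨EO Γ μ, μ, hμ, rfl⟩ hlb)

/-- `MEO(Γ_G) · Mod₂(Γ_G) = 1`; moreover, for any admissible
density attaining `Mod₂(Γ_G)` and any MEO-optimal pmf, `η_{μ*} = ρ*/Mod₂(Γ_G)`
on `E` and the complementary slackness condition holds. -/
theorem meo_mod2_duality
    {V : Type*} [Fintype V] [DecidableEq V]
    (G : SimpleGraph V) (hG : G.Connected) (hE : G.edgeFinset.Nonempty) :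
    MEO (spanningTrees G) * Mod2 G.edgeFinset (spanningTrees G) = 1 ∧
    ∀ ρ : Sym2 V → ℝ, Adm (spanningTrees G) ρ →
      (∑ e ∈ G.edgeFinset, (ρ e) ^ 2) = Mod2 G.edgeFinset (spanningTrees G) →
      ∀ μ, IsPmf (spanningTrees G) μ → EO (spanningTrees G) μ = MEO (spanningTrees G) →
        (∀ e ∈ G.edgeFinset,
          eta (spanningTrees G) μ e = ρ e / Mod2 G.edgeFinset (spanningTrees G)) ∧
        (∀ γ ∈ spanningTrees G, μ γ * (1 - ∑ e ∈ γ, ρ e) = 0) := by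
  classical
  set Γ := spanningTrees G with hΓdef
  set Es := G.edgeFinset with hEsdef
  have hsub : ∀ γ ∈ Γ, γ ⊆ Es := by
    intro γ hγ e he
    have h1 := (mem_spanningTrees_iff.1 hγ).1
    rw [hEsdef, SimpleGraph.mem_edgeFinset]
    exact h1 he
  have hn2 : 2 ≤ Fintype.card V := by
    obtain ⟨e, he⟩ := hE
    rw [SimpleGraph.mem_edgeFinset] at he
    obtain ⟨u, v, huv⟩ : ∃ u v, G.Adj u v := by
      induction e using Sym2.ind with | _ u v => exact ⟨u, v, he⟩
    exact Fintype.one_lt_card_iff_nontrivial.2 ⟨u, v, huv.ne⟩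
  have hγne : ∀ γ ∈ Γ, γ.Nonempty := by
    intro γ hγ
    rw [← Finset.card_pos, (mem_spanningTrees_iff.1 hγ).2.2]
    omega
  have hΓne : Γ.Nonempty := spanningTrees_nonempty G hG (exists_isTree_le G hG)
  obtain ⟨μS, hμS, hoptS⟩ := exists_min_pmf hΓne
  have hMEO : MEO Γ = EO Γ μS := MEO_eq hμS hoptS
  set E0 := EO Γ μS with hE0def
  have hone1 : ∀ γ ∈ Γ, 1 ≤ ∑ _e ∈ γ, (1:ℝ) := by
    intro γ hγ
    rw [Finset.sum_const, nsmul_eq_mul, mul_one]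
    have := hγne γ hγ
    rw [← Finset.card_pos] at this
    exact_mod_cast this
  have hkey1 := key_ineq Es Γ hsub hγne (fun _ => 1) (fun _ => zero_le_one) hone1 μS hμS hΓne
  have hEpos : 0 < E0 := by
    by_contra hle
    push_neg at hle
    have hA : (0:ℝ) ≤ ∑ e ∈ Es, (1:ℝ)^2 := Finset.sum_nonneg fun _ _ => by norm_num
    nlinarith
  set ρ0 : Sym2 V → ℝ := fun e => if e ∈ Es then eta Γ μS e / E0 else 0 with hρ0def
  have hρ0adm : Adm Γ ρ0 := by
    constructor
    · intro e
      rw [hρ0def]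
      by_cases h : e ∈ Es
      · simp only [h, if_true]
        exact div_nonneg (eta_nonneg hμS e) hEpos.le
      · simp [h]
    · intro γ hγ
      have heq : ∑ e ∈ γ, ρ0 e = (∑ e ∈ γ, eta Γ μS e) / E0 := by
        rw [Finset.sum_div]
        refine Finset.sum_congr rfl fun e he => ?_
        rw [hρ0def]
        simp [hsub γ hγ he]
      rw [heq, le_div_iff₀ hEpos, one_mul]
      exact variational hμS hoptS hγ
  have hval : ∑ e ∈ Es, (ρ0 e)^2 = 1 / E0 := by
    have heq : ∑ e ∈ Es, (ρ0 e)^2 = (∑ e ∈ Es, (eta Γ μS e)^2) / E0^2 := by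
      rw [Finset.sum_div]
      refine Finset.sum_congr rfl fun e he => ?_
      rw [hρ0def]
      simp only [he, if_true]
      rw [div_pow]
    rw [heq, ← EO_eq_sum_sq Es Γ hsub μS, ← hE0def]
    field_simp
  have hbdd : ∀ x ∈ {x : ℝ | ∃ ρ, Adm Γ ρ ∧ x = ∑ e ∈ Es, (ρ e) ^ 2}, (0:ℝ) ≤ x := by
    rintro x ⟨ρ, hρ, rfl⟩
    exact Finset.sum_nonneg fun e _ => sq_nonneg _
  have hMod_le : Mod2 Es Γ ≤ 1 / E0 :=
    csInf_le ⟨0, hbdd⟩ ⟨ρ0, hρ0adm, hval.symm⟩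
  have hMod_ge : 1 / E0 ≤ Mod2 Es Γ := by
    refine le_csInf ⟨1 / E0, ρ0, hρ0adm, hval.symm⟩ ?_
    rintro x ⟨ρ, hρ, rfl⟩
    have := key_ineq Es Γ hsub hγne ρ hρ.1 hρ.2 μS hμS hΓne
    rw [div_le_iff₀ hEpos]
    nlinarith
  have hMod : Mod2 Es Γ = 1 / E0 := le_antisymm hMod_le hMod_ge
  have hMpos : 0 < Mod2 Es Γ := by rw [hMod]; positivity
  constructor
  · rw [hMEO, hMod]
    field_simp
  · intro ρ hAdm hρM μ hμ hEOμ
    have hEOμ' : EO Γ μ = E0 := by rw [hEOμ, hMEO]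
    set M := Mod2 Es Γ with hMdef
    have hME : E0 = 1 / M := by rw [hMod]; field_simp
    have hs1 : 1 ≤ ∑ e ∈ Es, ρ e * eta Γ μ e := by
      rw [sum_rho_eta Es Γ hsub ρ μ]
      calc (1:ℝ) = ∑ γ ∈ Γ, μ γ := hμ.2.2.symm
        _ ≤ ∑ γ ∈ Γ, μ γ * ∑ e ∈ γ, ρ e := by
            refine Finset.sum_le_sum fun γ hγ => ?_
            nlinarith [hμ.1 γ, hAdm.2 γ hγ]
    set s := ∑ e ∈ Es, ρ e * eta Γ μ e with hsdef
    have hT : ∑ e ∈ Es, (eta Γ μ e - ρ e / M)^2 = 2 / M - 2 * s / M := by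
      have h1 : ∑ e ∈ Es, (eta Γ μ e - ρ e / M)^2 =
          (∑ e ∈ Es, (eta Γ μ e)^2) - (2 / M) * s + (∑ e ∈ Es, (ρ e)^2) / M^2 := by
        rw [hsdef, Finset.sum_div, Finset.mul_sum, ← Finset.sum_sub_distrib,
          ← Finset.sum_add_distrib]
        refine Finset.sum_congr rfl fun e _ => ?_
        field_simp
        ring
      rw [h1, ← EO_eq_sum_sq Es Γ hsub μ, hEOμ', hME, hρM]
      field_simp
      ring
    have hTnn : (0:ℝ) ≤ ∑ e ∈ Es, (eta Γ μ e - ρ e / M)^2 :=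
      Finset.sum_nonneg fun e _ => sq_nonneg _
    have hs_le : s ≤ 1 := by
      rw [hT] at hTnn
      have h4 : 0 ≤ (2 / M - 2 * s / M) * M := mul_nonneg hTnn hMpos.le
      rw [sub_mul, div_mul_cancel₀ _ hMpos.ne', div_mul_cancel₀ _ hMpos.ne'] at h4
      linarith
    have hs_eq : s = 1 := le_antisymm hs_le hs1
    have hT0 : ∑ e ∈ Es, (eta Γ μ e - ρ e / M)^2 = 0 := by
      rw [hT, hs_eq]
      ring
    constructor
    · intro e he
      have h1 := (Finset.sum_eq_zero_iff_of_nonneg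
        (fun e _ => sq_nonneg (eta Γ μ e - ρ e / M))).1 hT0 e he
      have h2 : eta Γ μ e - ρ e / M = 0 := by
        exact pow_eq_zero_iff (by norm_num) |>.1 h1
      linarith
    · intro γ hγ
      have hsum2 : ∑ γ ∈ Γ, μ γ * ((∑ e ∈ γ, ρ e) - 1) = 0 := by
        have hswap := sum_rho_eta Es Γ hsub ρ μ
        calc ∑ γ ∈ Γ, μ γ * ((∑ e ∈ γ, ρ e) - 1)
            = (∑ γ ∈ Γ, μ γ * ∑ e ∈ γ, ρ e) - ∑ γ ∈ Γ, μ γ := by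
              rw [← Finset.sum_sub_distrib]
              exact Finset.sum_congr rfl fun _ _ => by ring
          _ = s - 1 := by rw [← hswap, hμ.2.2, hsdef]
          _ = 0 := by rw [hs_eq]; ring
      have hterm := (Finset.sum_eq_zero_iff_of_nonneg
        (fun γ hγ' => mul_nonneg (hμ.1 γ) (by linarith [hAdm.2 γ hγ']))).1 hsum2 γ hγ
      have : μ γ * (1 - ∑ e ∈ γ, ρ e) = -(μ γ * ((∑ e ∈ γ, ρ e) - 1)) := by ring
      rw [this, hterm]
      ring
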